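/- Let P ⊆ ℝ be a compact set with no isolated points such that every nonempty relatively open subset of P has positive Lebesgue measure, let K' ⊆ ℝ be compact with dim_p K' < 1, and let N > 1/(1 - dim_p K'). If J_0,...,J_{N-1} are closed intervals whose interiors each meet P, then there exist pairwise disjoint closed intervals I_i ⊆ J_i whose interiors meet P such that no translate of K' contains one point from each I_i ∩ P; i.e. the product ∏_{i<N}(I_i ∩ P) is disjoint from F_N = {(x_i) : ∃ t, ∀ i, x_i ∈ K' + t}. -/

import Mathlib

open Filter Set MeasureTheory
open scoped Pointwise ENNReal

/-- Minimal number of `ε`-balls needed to cover `s` (as an element of `ℝ≥0∞`,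
`⊤` if no finite cover exists). -/
noncomputable def coverN {α : Type*} [PseudoMetricSpace α] (s : Set α) (ε : ℝ) : ℝ≥0∞ :=
  ⨅ (t : Finset α) (_ : s ⊆ ⋃ x ∈ t, Metric.ball x ε), (t.card : ℝ≥0∞)

open Classical in
/-- Upper box (Minkowski) dimension. -/
noncomputable def ubDim {α : Type*} [PseudoMetricSpace α] (s : Set α) : ℝ≥0∞ :=
  Filter.limsup (fun ε : ℝ =>
      if coverN s ε = ⊤ then ⊤
      else ENNReal.ofReal (Real.log (coverN s ε).toReal / Real.log ε⁻¹))
    (nhdsWithin (0 : ℝ) (Set.Ioi 0))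

/-- Packing dimension, defined as modified upper box dimension. -/
noncomputable def packingDim {α : Type*} [PseudoMetricSpace α] (s : Set α) : ℝ≥0∞ :=
  ⨅ (A : ℕ → Set α) (_ : s ⊆ ⋃ n, A n), ⨆ n, ubDim (A n)


open Metric in
lemma diag_null (N : ℕ) (i j : Fin N) (hij : i ≠ j) :
    volume {x : Fin N → ℝ | x i = x j} = 0 := by
  have : {x : Fin N → ℝ | x i = x j} =
      (LinearMap.ker ((LinearMap.proj i : (Fin N → ℝ) →ₗ[ℝ] ℝ) - LinearMap.proj j) : Set (Fin N → ℝ)) := by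
    ext x; simp [sub_eq_zero, LinearMap.sub_apply, eq_comm]
  rw [this]
  apply Measure.addHaar_submodule
  intro h
  have := h ▸ Submodule.mem_top (x := Pi.single i (1:ℝ))
  have h2 : (Pi.single i (1:ℝ)) ∈ LinearMap.ker ((LinearMap.proj i : (Fin N → ℝ) →ₗ[ℝ] ℝ) - LinearMap.proj j) := by
    rw [h]; trivial
  simp [LinearMap.mem_ker, LinearMap.sub_apply, Pi.single_apply, hij.symm] at h2

open Metric Topology in
lemma cover_of_ubDim_lt (A : Set ℝ) (b : ℝ) (hb : 0 < b) (h : ubDim A < ENNReal.ofReal b) :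
    ∀ᶠ ε in 𝓝[>] (0:ℝ), ∃ t : Finset ℝ,
      (A ⊆ ⋃ x ∈ t, Metric.ball x ε) ∧ (t.card : ℝ) ≤ 2 * ε ^ (-b) := by
  classical
  have hev : ∀ᶠ ε in 𝓝[>] (0:ℝ),
      (if coverN A ε = ⊤ then (⊤:ℝ≥0∞)
        else ENNReal.ofReal (Real.log (coverN A ε).toReal / Real.log ε⁻¹)) < ENNReal.ofReal b :=
    Filter.eventually_lt_of_limsup_lt h
  have hsm : ∀ᶠ ε in 𝓝[>] (0:ℝ), ε ∈ Ioo (0:ℝ) 1 := by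
    filter_upwards [self_mem_nhdsWithin,
      eventually_nhdsWithin_of_eventually_nhds (eventually_lt_nhds one_pos)] with ε h1 h2
    exact ⟨h1, h2⟩
  filter_upwards [hev, hsm] with ε hlt hε
  have hne : coverN A ε ≠ ⊤ := by
    intro htop; rw [htop] at hlt; simp at hlt
  rw [if_neg hne] at hlt
  have hlog : Real.log (coverN A ε).toReal / Real.log ε⁻¹ < b :=
    (ENNReal.ofReal_lt_ofReal_iff hb).1 hlt
  have hinv : 1 < ε⁻¹ := (one_lt_inv₀ hε.1).2 hε.2
  have hloginv : 0 < Real.log ε⁻¹ := Real.log_pos hinv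
  -- ε ^ (-b) ≥ 1
  have hεb1 : (1:ℝ) ≤ ε ^ (-b) := by
    rw [Real.rpow_neg hε.1.le, one_le_inv₀ (Real.rpow_pos_of_pos hε.1 b)]
    exact Real.rpow_le_one hε.1.le hε.2.le hb.le
  -- coverN toReal bound
  have hn : (coverN A ε).toReal ≤ ε ^ (-b) := by
    set n := (coverN A ε).toReal with hndef
    have hn0 : 0 ≤ n := ENNReal.toReal_nonneg
    rcases eq_or_lt_of_le hn0 with h0 | h0
    · rw [← h0]; positivity
    · have : Real.log n < b * Real.log ε⁻¹ := by
        rwa [div_lt_iff₀ hloginv] at hlog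
      have : n < Real.exp (b * Real.log ε⁻¹) := by
        calc n = Real.exp (Real.log n) := (Real.exp_log h0).symm
        _ < _ := Real.exp_lt_exp.2 this
      refine le_of_lt (lt_of_lt_of_le this ?_)
      rw [Real.rpow_neg hε.1.le, ← Real.inv_rpow hε.1.le,
        Real.rpow_def_of_pos (inv_pos.2 hε.1), mul_comm]
  -- extract a finite cover
  have hcov : coverN A ε < coverN A ε + 1 := ENNReal.lt_add_right hne one_ne_zero
  obtain ⟨t, ht, hcard⟩ : ∃ t : Finset ℝ, (A ⊆ ⋃ x ∈ t, Metric.ball x ε) ∧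
      (t.card : ℝ≥0∞) < coverN A ε + 1 := by
    have h2 : (⨅ (t : Finset ℝ) (_ : A ⊆ ⋃ x ∈ t, Metric.ball x ε), (t.card : ℝ≥0∞))
        < coverN A ε + 1 := hcov
    rw [iInf_lt_iff] at h2
    obtain ⟨t, h2⟩ := h2
    rw [iInf_lt_iff] at h2
    obtain ⟨ht, h2⟩ := h2
    exact ⟨t, ht, h2⟩
  refine ⟨t, ht, ?_⟩
  have : (t.card : ℝ) < (coverN A ε).toReal + 1 := by
    have := ENNReal.toReal_lt_toReal (by simp) (by finiteness) |>.2 hcard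
    simpa [ENNReal.toReal_add hne] using this
  nlinarith

open Metric Topology in
lemma exists_grid (M : ℝ) (hM : 0 ≤ M) {ε : ℝ} (hε : 0 < ε) (hε1 : ε ≤ 1) :
    ∃ G : Finset ℝ, (Icc (-M) M ⊆ ⋃ s ∈ G, Metric.ball s ε) ∧
      (G.card : ℝ) ≤ (2*M+2)/ε := by
  refine ⟨(Finset.range (⌊2*M/ε⌋₊ + 1)).image (fun j : ℕ => -M + ε * (j:ℝ)), ?_, ?_⟩
  · intro x hx
    have hx1 : 0 ≤ (x + M)/ε := div_nonneg (by linarith [hx.1]) hε.le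
    set j := ⌊(x + M)/ε⌋₊ with hj
    have hjle : (j:ℝ) ≤ (x + M)/ε := Nat.floor_le hx1
    have hjlt : (x + M)/ε < j + 1 := Nat.lt_floor_add_one _
    have hjmem : j ∈ Finset.range (⌊2*M/ε⌋₊ + 1) := by
      rw [Finset.mem_range, Nat.lt_succ_iff]
      exact Nat.floor_mono (by gcongr; linarith [hx.2])
    refine mem_iUnion₂.2 ⟨-M + ε * j, Finset.mem_image_of_mem _ hjmem, ?_⟩
    rw [mem_ball, Real.dist_eq, abs_lt]
    constructor
    · have := (le_div_iff₀ hε).1 hjle; nlinarith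
    · have := (div_lt_iff₀ hε).1 hjlt; nlinarith
  · calc ((Finset.image (fun j : ℕ => -M + ε * (j:ℝ)) (Finset.range (⌊2*M/ε⌋₊ + 1))).card : ℝ)
        ≤ ((Finset.range (⌊2*M/ε⌋₊ + 1)).card : ℝ) := by
          exact_mod_cast Finset.card_image_le
      _ = (⌊2*M/ε⌋₊ : ℝ) + 1 := by simp
      _ ≤ 2*M/ε + 1 := by
          have := Nat.floor_le (show 0 ≤ 2*M/ε by positivity); linarith
      _ ≤ (2*M+2)/ε := by
          rw [div_add' _ _ _ hε.ne', div_le_div_iff_of_pos_right hε]; nlinarith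

open Metric Topology in
lemma piece_null {N : ℕ} (A : Fin N → Set ℝ) (b M : ℝ) (hb : 0 < b)
    (hbN : b * N < N - 1) (hM : 0 ≤ M)
    (hA : ∀ i, ∀ᶠ ε in 𝓝[>] (0:ℝ), ∃ t : Finset ℝ,
      (A i ⊆ ⋃ x ∈ t, Metric.ball x ε) ∧ (t.card : ℝ) ≤ 2 * ε ^ (-b)) :
    volume {y : Fin N → ℝ | ∃ k : Fin N → ℝ, ∃ t : ℝ, (∀ i, k i ∈ A i) ∧
      t ∈ Icc (-M) M ∧ y = fun i => k i + t} = 0 := by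
  classical
  set S := {y : Fin N → ℝ | ∃ k : Fin N → ℝ, ∃ t : ℝ, (∀ i, k i ∈ A i) ∧
      t ∈ Icc (-M) M ∧ y = fun i => k i + t} with hS
  set η : ℝ := (N:ℝ) - 1 - b * N with hη
  have hηpos : 0 < η := by simp only [hη]; linarith
  set C : ℝ := (2*M+2) * 2^N * 4^N with hC
  have hCpos : 0 < C := by positivity
  -- eventual bound
  have hsm : ∀ᶠ ε in 𝓝[>] (0:ℝ), ε ∈ Ioo (0:ℝ) 1 := by
    filter_upwards [self_mem_nhdsWithin,
      eventually_nhdsWithin_of_eventually_nhds (eventually_lt_nhds one_pos)] with ε h1 h2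
    exact ⟨h1, h2⟩
  have hbound : ∀ᶠ ε in 𝓝[>] (0:ℝ), volume S ≤ ENNReal.ofReal (C * ε ^ η) := by
    filter_upwards [hsm, eventually_all.2 hA] with ε hε hcovs
    have hε0 : 0 < ε := hε.1
    have hε1 : ε < 1 := hε.2
    have hεb : (0:ℝ) < ε ^ (-b) := Real.rpow_pos_of_pos hε0 _
    choose tt htt httcard using hcovs
    obtain ⟨G, hG, hGcard⟩ := exists_grid M hM hε.1 hε.2.le
    -- inclusion into a union of boxes
    have hincl : S ⊆ ⋃ s ∈ G, ⋃ u ∈ Fintype.piFinset tt,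
        univ.pi (fun i => Metric.ball (u i + s) (2*ε)) := by
      rintro y ⟨k, t, hk, ht, rfl⟩
      obtain ⟨s, hsG, hts⟩ := mem_iUnion₂.1 (hG ht)
      have hui : ∀ i, ∃ u ∈ tt i, k i ∈ Metric.ball u ε := by
        intro i; simpa using htt i (hk i)
      choose u huu hku using hui
      refine mem_iUnion₂.2 ⟨s, hsG, mem_iUnion₂.2 ⟨u, ?_, ?_⟩⟩
      · exact Fintype.mem_piFinset.2 huu
      · intro i _
        rw [mem_ball]
        calc dist (k i + t) (u i + s) ≤ dist (k i) (u i) + dist t s := dist_add_add_le _ _ _ _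
          _ < ε + ε := add_lt_add (hku i) hts
          _ = 2*ε := by ring
    -- measure bound
    have hvol : volume S ≤ (G.card : ℝ≥0∞) * ((Fintype.piFinset tt).card : ℝ≥0∞)
        * (ENNReal.ofReal (4*ε)) ^ N := by
      refine le_trans (measure_mono hincl) ?_
      refine le_trans (measure_biUnion_finset_le _ _) ?_
      have hbox : ∀ s : ℝ, ∀ u : Fin N → ℝ,
          volume (univ.pi (fun i => Metric.ball (u i + s) (2*ε))) = (ENNReal.ofReal (4*ε)) ^ N := by
        intro s u
        rw [volume_pi_pi]
        simp only [Real.volume_ball]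
        rw [show (2:ℝ)*(2*ε) = 4*ε by ring, Finset.prod_const, Finset.card_univ,
          Fintype.card_fin]
      calc ∑ s ∈ G, volume (⋃ u ∈ Fintype.piFinset tt,
              univ.pi (fun i => Metric.ball (u i + s) (2*ε)))
          ≤ ∑ s ∈ G, ∑ u ∈ Fintype.piFinset tt,
              volume (univ.pi (fun i => Metric.ball (u i + s) (2*ε))) := by
            exact Finset.sum_le_sum fun s _ => measure_biUnion_finset_le _ _
        _ = ∑ s ∈ G, ∑ _u ∈ Fintype.piFinset tt, (ENNReal.ofReal (4*ε)) ^ N := by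
            refine Finset.sum_congr rfl fun s _ => Finset.sum_congr rfl fun u _ => hbox s u
        _ = (G.card : ℝ≥0∞) * ((Fintype.piFinset tt).card : ℝ≥0∞) * (ENNReal.ofReal (4*ε)) ^ N := by
            simp [Finset.sum_const, mul_assoc, mul_comm, mul_left_comm]
    -- convert to real bound
    have hcard2 : ((Fintype.piFinset tt).card : ℝ) ≤ (2 * ε ^ (-b)) ^ N := by
      rw [Fintype.card_piFinset]
      calc ((∏ i, (tt i).card : ℕ) : ℝ) = ∏ i, ((tt i).card : ℝ) := by push_cast; ring
        _ ≤ ∏ _i : Fin N, (2 * ε ^ (-b)) := by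
            refine Finset.prod_le_prod (fun i _ => by positivity) fun i _ => httcard i
        _ = (2 * ε ^ (-b)) ^ N := by simp
    refine le_trans hvol ?_
    have h1 : (G.card : ℝ≥0∞) = ENNReal.ofReal (G.card : ℝ) := (ENNReal.ofReal_natCast _).symm
    have h2 : ((Fintype.piFinset tt).card : ℝ≥0∞)
        = ENNReal.ofReal ((Fintype.piFinset tt).card : ℝ) := (ENNReal.ofReal_natCast _).symm
    rw [h1, h2, ← ENNReal.ofReal_pow (by linarith), ← ENNReal.ofReal_mul (by positivity),
      ← ENNReal.ofReal_mul (by positivity)]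
    refine ENNReal.ofReal_le_ofReal ?_
    calc (G.card : ℝ) * ((Fintype.piFinset tt).card : ℝ) * (4*ε)^N
        ≤ ((2*M+2)/ε) * ((2 * ε ^ (-b)) ^ N) * (4*ε)^N := by
          refine mul_le_mul (mul_le_mul hGcard hcard2 (by positivity) (by positivity))
            le_rfl (by positivity) (by positivity)
      _ = C * ε ^ η := by
          have e1 : ((2:ℝ) * ε ^ (-b)) ^ N = 2^N * ε ^ (-(b*(N:ℝ))) := by
            rw [mul_pow, ← Real.rpow_natCast (ε ^ (-b)) N, ← Real.rpow_mul hε0.le]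
            congr 1; ring
          have e2 : ((4:ℝ)*ε)^N = 4^N * ε ^ ((N:ℝ)) := by
            rw [mul_pow, Real.rpow_natCast]
          have e3 : ε⁻¹ * ε^(-(b*(N:ℝ))) * ε^((N:ℝ)) = ε ^ η := by
            rw [← Real.rpow_neg_one ε, ← Real.rpow_add hε0, ← Real.rpow_add hε0]
            congr 1; rw [hη]; ring
          rw [e1, e2, div_eq_mul_inv, hC,
            show (2*M+2) * ε⁻¹ * (2^N * ε^(-(b*(N:ℝ)))) * (4^N * ε^((N:ℝ)))
              = (2*M+2)*2^N*4^N * (ε⁻¹ * ε^(-(b*(N:ℝ))) * ε^((N:ℝ))) from by ring, e3]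
  -- conclude
  have htends : Tendsto (fun ε : ℝ => ENNReal.ofReal (C * ε ^ η)) (𝓝[>] (0:ℝ)) (𝓝 0) := by
    have h0 : Tendsto (fun ε : ℝ => ε ^ η) (𝓝[>] (0:ℝ)) (𝓝 0) := by
      have := (Real.continuousAt_rpow_const 0 η (Or.inr hηpos.le)).tendsto
      rw [Real.zero_rpow hηpos.ne'] at this
      exact this.mono_left nhdsWithin_le_nhds
    have : Tendsto (fun ε : ℝ => C * ε ^ η) (𝓝[>] (0:ℝ)) (𝓝 0) := by
      simpa using h0.const_mul C
    simpa using (ENNReal.tendsto_ofReal (a := 0) this)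
  have : volume S ≤ 0 := ge_of_tendsto htends (by filter_upwards [hbound] with ε h using h)
  exact le_antisymm this zero_le

open Metric Topology in
theorem stmt3 (P : Set ℝ) (hPcomp : IsCompact P)
    (hPacc : ∀ x ∈ P, AccPt x (Filter.principal P))
    (hPpos : ∀ U : Set ℝ, IsOpen U → (U ∩ P).Nonempty → 0 < volume (U ∩ P))
    (K' : Set ℝ) (hK : IsCompact K') (hdim : packingDim K' < 1)
    (N : ℕ) (hNbig : ((1 : ℝ≥0∞) - packingDim K')⁻¹ < (N : ℝ≥0∞))
    (a b : Fin N → ℝ) (hJ : ∀ i, (Set.Ioo (a i) (b i) ∩ P).Nonempty) :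
    ∃ c d : Fin N → ℝ,
      (∀ i, Set.Icc (c i) (d i) ⊆ Set.Icc (a i) (b i)) ∧
      (Pairwise fun i j => Disjoint (Set.Icc (c i) (d i)) (Set.Icc (c j) (d j))) ∧
      (∀ i, (Set.Ioo (c i) (d i) ∩ P).Nonempty) ∧
      ∀ x : Fin N → ℝ, (∀ i, x i ∈ Set.Icc (c i) (d i) ∩ P) →
        ¬ ∃ t : ℝ, ∀ i, x i ∈ (fun k => k + t) '' K' := by
  classical
  -- basic numerics
  have hpdtop : packingDim K' ≠ ⊤ := (hdim.trans (by norm_num)).ne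
  have hNinv : (N : ℝ≥0∞)⁻¹ < 1 - packingDim K' := by
    rw [← ENNReal.inv_lt_inv]
    simpa using hNbig
  have hN1 : 1 < N := by
    have h1 : (N : ℝ≥0∞)⁻¹ < 1 := lt_of_lt_of_le hNinv tsub_le_self
    rw [ENNReal.inv_lt_one] at h1
    exact_mod_cast h1
  have hNpos : 0 < N := by omega
  have hsum : packingDim K' + (N : ℝ≥0∞)⁻¹ < 1 :=
    (ENNReal.cancel_of_ne hpdtop).lt_tsub_iff_left.1 hNinv
  set p : ℝ := (packingDim K').toReal with hp
  have hp0 : 0 ≤ p := ENNReal.toReal_nonneg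
  have hpreal : p + ((N:ℝ))⁻¹ < 1 := by
    have := ENNReal.toReal_lt_toReal (a := packingDim K' + (N : ℝ≥0∞)⁻¹) (b := 1)
      (by finiteness) (by norm_num) |>.2 hsum
    rw [ENNReal.toReal_add hpdtop (by finiteness), ENNReal.toReal_inv] at this
    simpa using this
  have hNr : (1:ℝ) < N := by exact_mod_cast hN1
  set β : ℝ := (p + (1 - ((N:ℝ))⁻¹)) / 2 with hβ
  have hinvN : (0:ℝ) < ((N:ℝ))⁻¹ := by positivity
  have hβpos : 0 < β := by
    rw [hβ]
    have : ((N:ℝ))⁻¹ < 1 := by rw [inv_lt_one_iff₀]; right; exact hNr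
    linarith
  have hpβ : p < β := by rw [hβ]; linarith
  have hβN : β * N < (N:ℝ) - 1 := by
    have h1 : β < 1 - ((N:ℝ))⁻¹ := by rw [hβ]; linarith
    have h2 : ((N:ℝ))⁻¹ * N = 1 := by field_simp
    nlinarith
  have hdimβ : packingDim K' < ENNReal.ofReal β := by
    have : packingDim K' = ENNReal.ofReal p := (ENNReal.ofReal_toReal hpdtop).symm
    rw [this]
    exact (ENNReal.ofReal_lt_ofReal_iff hβpos).2 hpβ
  -- extract the countable cover from the packing dimension bound
  obtain ⟨A, hcover, hsupA⟩ : ∃ A : ℕ → Set ℝ, K' ⊆ ⋃ n, A n ∧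
      (⨆ n, ubDim (A n)) < ENNReal.ofReal β := by
    have := hdimβ
    rw [packingDim, iInf_lt_iff] at this
    obtain ⟨A, hA⟩ := this
    rw [iInf_lt_iff] at hA
    obtain ⟨h1, h2⟩ := hA
    exact ⟨A, h1, h2⟩
  have hAdim : ∀ n, ubDim (A n) < ENNReal.ofReal β :=
    fun n => lt_of_le_of_lt (le_iSup (fun n => ubDim (A n)) n) hsupA
  have hAev : ∀ n, ∀ᶠ ε in 𝓝[>] (0:ℝ), ∃ t : Finset ℝ,
      (A n ⊆ ⋃ x ∈ t, Metric.ball x ε) ∧ (t.card : ℝ) ≤ 2 * ε ^ (-β) :=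
    fun n => cover_of_ubDim_lt _ _ hβpos (hAdim n)
  -- the translation parameter set
  set i0 : Fin N := ⟨0, hNpos⟩ with hi0
  set T : Set ℝ := Icc (a i0) (b i0) - K' with hT
  have hTcomp : IsCompact T := by
    rw [hT, sub_eq_add_neg]
    exact isCompact_Icc.add hK.neg
  obtain ⟨M0, hM0⟩ := hTcomp.isBounded.subset_closedBall 0
  set M : ℝ := max M0 0 with hM
  have hMnn : 0 ≤ M := le_max_right _ _
  have hTM : T ⊆ Icc (-M) M := by
    refine hM0.trans ?_
    intro z hz
    rw [Metric.mem_closedBall, Real.dist_eq, sub_zero] at hz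
    have := abs_le.1 hz
    constructor <;> [skip; skip] <;>
      simp only [hM] <;> cases' this with h1 h2 <;>
      [linarith [le_max_left M0 (0:ℝ)]; linarith [le_max_left M0 (0:ℝ)]]
  -- the compact "bad" set
  set Cset : Set (Fin N → ℝ) :=
    (fun q : (Fin N → ℝ) × ℝ => fun i => q.1 i + q.2) ''
      ((univ.pi fun _ : Fin N => K') ×ˢ T) with hCset
  have hCcomp : IsCompact Cset := by
    refine ((isCompact_univ_pi fun _ => hK).prod hTcomp).image ?_
    exact continuous_pi fun i => ((continuous_apply i).comp continuous_fst).add continuous_snd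
  have hCnull : volume Cset = 0 := by
    have hsub : Cset ⊆ ⋃ m : Fin N → ℕ, {y : Fin N → ℝ | ∃ k : Fin N → ℝ, ∃ t : ℝ,
        (∀ i, k i ∈ A (m i)) ∧ t ∈ Icc (-M) M ∧ y = fun i => k i + t} := by
      rintro y ⟨⟨k, t⟩, ⟨hk, ht⟩, rfl⟩
      have hkn : ∀ i, ∃ n, k i ∈ A n := fun i => mem_iUnion.1 (hcover (hk i (mem_univ i)))
      choose m hm using hkn
      exact mem_iUnion.2 ⟨m, k, t, hm, hTM ht, rfl⟩
    refine measure_mono_null hsub (measure_iUnion_null fun m => ?_)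
    exact piece_null (fun i => A (m i)) β M hβpos hβN hMnn fun i => hAev (m i)
  -- pick a good point x
  set Z : Set (Fin N → ℝ) := Cset ∪ ⋃ (q : Fin N × Fin N) (_ : q.1 ≠ q.2),
      {x : Fin N → ℝ | x q.1 = x q.2} with hZ
  have hZnull : volume Z = 0 := by
    refine measure_union_null hCnull (measure_iUnion_null fun q => measure_iUnion_null fun hq => ?_)
    exact diag_null N q.1 q.2 hq
  set E : Set (Fin N → ℝ) := univ.pi fun i => Ioo (a i) (b i) ∩ P with hE
  have hEpos : 0 < volume E := by
    rw [hE, volume_pi_pi]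
    rw [CanonicallyOrderedAdd.prod_pos]
    exact fun i _ => hPpos _ isOpen_Ioo (hJ i)
  obtain ⟨x, hxE, hxZ⟩ : (E \ Z).Nonempty := by
    refine nonempty_of_measure_ne_zero (μ := volume) ?_
    rw [measure_diff_null hZnull]
    exact hEpos.ne'
  have hxP : ∀ i, x i ∈ Ioo (a i) (b i) ∩ P := fun i => hxE i (mem_univ i)
  have hxC : x ∉ Cset := fun h => hxZ (Or.inl h)
  have hxdiag : ∀ i j : Fin N, i ≠ j → x i ≠ x j := by
    intro i j hij hxij
    exact hxZ (Or.inr (mem_iUnion₂.2 ⟨(i, j), hij, hxij⟩))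
  -- choose the radius δ
  obtain ⟨ε, hεpos, hball⟩ := Metric.isOpen_iff.1 hCcomp.isClosed.isOpen_compl x hxC
  set i1 : Fin N := ⟨1, hN1⟩ with hi1
  have hi01 : i0 ≠ i1 := by
    simp only [hi0, hi1, Ne, Fin.mk.injEq]
    omega
  have hpne : (Finset.univ.offDiag : Finset (Fin N × Fin N)).Nonempty :=
    ⟨(i0, i1), Finset.mem_offDiag.2 ⟨Finset.mem_univ _, Finset.mem_univ _, hi01⟩⟩
  set δ2 : ℝ := Finset.univ.offDiag.inf' hpne (fun q => |x q.1 - x q.2|) with hδ2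
  have hδ2pos : 0 < δ2 := by
    rw [hδ2, Finset.lt_inf'_iff]
    intro q hq
    rw [abs_pos, sub_ne_zero]
    exact hxdiag q.1 q.2 (Finset.mem_offDiag.1 hq).2.2
  have hune : (Finset.univ : Finset (Fin N)).Nonempty := ⟨i0, Finset.mem_univ _⟩
  set δ3 : ℝ := Finset.univ.inf' hune (fun i => min (x i - a i) (b i - x i)) with hδ3
  have hδ3pos : 0 < δ3 := by
    rw [hδ3, Finset.lt_inf'_iff]
    intro i _
    exact lt_min (by linarith [(hxP i).1.1]) (by linarith [(hxP i).1.2])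
  set δ : ℝ := min (ε/2) (min (δ2/3) δ3) with hδ
  have hδpos : 0 < δ := lt_min (by linarith) (lt_min (by linarith) hδ3pos)
  have hδε : δ < ε := lt_of_le_of_lt (min_le_left _ _) (by linarith)
  have hδ2' : 3 * δ ≤ δ2 := by
    have := (min_le_right (ε/2) _).trans (min_le_left (δ2/3) δ3)
    linarith [min_le_left (δ2/3) δ3, (min_le_right (ε/2) (min (δ2/3) δ3))]
  have hδ3' : ∀ i, δ ≤ min (x i - a i) (b i - x i) := by
    intro i
    exact ((min_le_right (ε/2) _).trans (min_le_right (δ2/3) δ3)).trans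
      (Finset.inf'_le _ (Finset.mem_univ i))
  refine ⟨fun i => x i - δ, fun i => x i + δ, ?_, ?_, ?_, ?_⟩
  · intro i
    have h := hδ3' i
    rw [le_min_iff] at h
    exact Icc_subset_Icc (by show a i ≤ x i - δ; linarith [h.1])
      (by show x i + δ ≤ b i; linarith [h.2])
  · intro i j hij
    rw [Set.disjoint_left]
    intro z hzi hzj
    simp only [Set.mem_Icc] at hzi hzj
    have habs : |x i - x j| ≤ 2 * δ :=
      abs_le.2 ⟨by linarith [hzi.1, hzj.2], by linarith [hzi.2, hzj.1]⟩
    have hle : δ2 ≤ |x i - x j| :=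
      Finset.inf'_le (b := (i, j)) _
        (Finset.mem_offDiag.2 ⟨Finset.mem_univ _, Finset.mem_univ _, hij⟩)
    linarith
  · intro i
    refine ⟨x i, ⟨?_, (hxP i).2⟩⟩
    simp only [Set.mem_Ioo]
    constructor <;> linarith
  · rintro y hy ⟨t, hty⟩
    have hyK : ∀ i, ∃ k ∈ K', k + t = y i := by
      intro i
      obtain ⟨k, hk, hkt⟩ := hty i
      exact ⟨k, hk, hkt⟩
    choose k hkK hkt using hyK
    have hyC : y ∈ Cset := by
      refine ⟨(k, t), ⟨fun i _ => hkK i, ?_⟩, funext fun i => hkt i⟩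
      rw [hT, Set.mem_sub]
      refine ⟨y i0, ?_, k i0, hkK i0, ?_⟩
      · have h1 := (hy i0).1
        simp only [Set.mem_Icc] at h1
        have h2 := hδ3' i0
        rw [le_min_iff] at h2
        exact ⟨by linarith [h1.1], by linarith [h1.2]⟩
      · linarith [hkt i0]
    have hyb : y ∈ Metric.ball x ε := by
      rw [mem_ball, dist_pi_lt_iff hεpos]
      intro i
      rw [Real.dist_eq]
      have h1 := (hy i).1
      simp only [Set.mem_Icc] at h1
      have : |y i - x i| ≤ δ := abs_le.2 ⟨by linarith [h1.1], by linarith [h1.2]⟩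
      linarith
    exact hball hyb hyC
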